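/- Let f be a function holomorphic on an open set containing the closed disc D̄_r(w₀) ⊂ ℂ. Then for any z in the open disc D_r(w₀), (1/(2πi)) ∮_{|w - w₀| = r} conj(f(w)) / (w - z) dw = conj(f(w₀)). (Antiholomorphic Cauchy integral formula: the integral is independent of z and recovers the conjugate value at the center.) -/

import Mathlib

open Metric

private lemma conj_comp_hasDerivAt {f : ℂ → ℂ} {d z : ℂ}
    (h : HasDerivAt f d ((starRingEnd ℂ) z)) :
    HasDerivAt (fun ζ => (starRingEnd ℂ) (f ((starRingEnd ℂ) ζ)))
      ((starRingEnd ℂ) d) z := by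
  have hc : HasFDerivAt (fun ζ : ℂ => (starRingEnd ℂ) ζ)
      (Complex.conjCLE.toContinuousLinearMap : ℂ →L[ℝ] ℂ) z :=
    Complex.conjCLE.hasFDerivAt
  have hc' : HasFDerivAt (fun ζ : ℂ => (starRingEnd ℂ) ζ)
      (Complex.conjCLE.toContinuousLinearMap : ℂ →L[ℝ] ℂ) (f ((starRingEnd ℂ) z)) :=
    Complex.conjCLE.hasFDerivAt
  have h1 : HasFDerivAt f
      ((ContinuousLinearMap.smulRight (1 : ℂ →L[ℂ] ℂ) d).restrictScalars ℝ)
      ((starRingEnd ℂ) z) := h.hasFDerivAt.restrictScalars ℝ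
  have h2 := hc'.comp z (h1.comp z hc)
  have h3 : HasFDerivAt (fun ζ => (starRingEnd ℂ) (f ((starRingEnd ℂ) ζ)))
      ((ContinuousLinearMap.smulRight (1 : ℂ →L[ℂ] ℂ) ((starRingEnd ℂ) d)) : ℂ →L[ℂ] ℂ) z := by
    apply hasFDerivAt_of_restrictScalars (𝕜 := ℝ) h2
    ext u
    simp [ContinuousLinearMap.comp_apply, smul_eq_mul, map_mul]
  simpa using h3.hasDerivAt

/-- antiholomorphic Cauchy integral formula. If `f` is
holomorphic on an open set containing the closed disc of radius `r` about
`w₀`, then for every `z` in the open disc,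
`(1/(2πi)) ∮_{|w - w₀| = r} conj (f w) / (w - z) dw = conj (f w₀)`. -/
theorem stmt6 (f : ℂ → ℂ) (w₀ z : ℂ) (r : ℝ) (hr : 0 < r)
    (s : Set ℂ) (hs : IsOpen s) (hsub : closedBall w₀ r ⊆ s)
    (hf : DifferentiableOn ℂ f s) (hz : z ∈ ball w₀ r) :
    (2 * Real.pi * Complex.I)⁻¹ *
      (∮ w in C(w₀, r), (starRingEnd ℂ) (f w) / (w - z)) =
      (starRingEnd ℂ) (f w₀) := by
  obtain ⟨δ, hδ, hδs⟩ := (isCompact_closedBall w₀ r).exists_cthickening_subset_open hs hsub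
  set r' : ℝ := δ + r with hr'def
  have hrr' : r < r' := by simp only [hr'def]; linarith
  have hr'pos : 0 < r' := lt_trans hr hrr'
  have hsub' : closedBall w₀ r' ⊆ s := by
    rw [hr'def, ← cthickening_closedBall hδ.le hr.le w₀]; exact hδs
  set F : ℂ → ℂ := fun ζ => (starRingEnd ℂ) (f ((starRingEnd ℂ) ζ)) with hF
  set H : ℂ → ℂ := fun u => F ((starRingEnd ℂ) w₀ + (r : ℂ) ^ 2 * u) with hH
  set L : ℂ := (starRingEnd ℂ) (f w₀) with hL
  have hdr : dist z w₀ < r := mem_ball.mp hz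
  have hd0 : 0 ≤ dist z w₀ := dist_nonneg
  have hsne : ∀ w ∈ sphere w₀ r, w - z ≠ 0 := by
    intro w hw
    rw [sub_ne_zero]
    rintro rfl
    have := mem_sphere.mp hw
    have := mem_ball.mp hz
    linarith
  have hdF : ∀ ζ : ℂ, (starRingEnd ℂ) ζ ∈ s → DifferentiableAt ℂ F ζ := by
    intro ζ hζ
    exact (conj_comp_hasDerivAt
      ((hf.differentiableAt (hs.mem_nhds hζ)).hasDerivAt)).differentiableAt
  have hdH : ∀ u : ℂ, ‖u‖ ≤ r' / r ^ 2 → DifferentiableAt ℂ H u := by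
    intro u hu
    have hmem : (starRingEnd ℂ) ((starRingEnd ℂ) w₀ + (r : ℂ) ^ 2 * u) ∈ s := by
      apply hsub'
      have h1 : (starRingEnd ℂ) ((starRingEnd ℂ) w₀ + (r : ℂ) ^ 2 * u) - w₀
          = (r : ℂ) ^ 2 * (starRingEnd ℂ) u := by
        simp only [map_add, map_mul, map_pow, Complex.conj_conj, Complex.conj_ofReal]
        ring
      simp only [mem_closedBall, dist_eq_norm, h1, norm_mul, norm_pow,
        Complex.norm_real, RCLike.norm_conj]
      calc ‖(r:ℝ)‖ ^ 2 * ‖u‖ ≤ r ^ 2 * (r' / r ^ 2) := by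
            rw [Real.norm_eq_abs, abs_of_pos hr]
            exact mul_le_mul_of_nonneg_left hu (by positivity)
        _ = r' := by field_simp
    exact (hdF _ hmem).comp (g := F) (f := fun u => (starRingEnd ℂ) w₀ + (r : ℂ) ^ 2 * u) u ((differentiableAt_id.const_mul _).const_add _)
  have hH0 : H 0 = L := by simp [hH, hF, hL, Complex.conj_conj]
  have hthr : 1 / r < r' / r ^ 2 := by
    rw [div_lt_div_iff₀ hr (by positivity)]
    nlinarith
  set k : ℂ → ℂ := fun w => (H ((w - w₀)⁻¹) - L) / (w - z) with hk
  have hdk : ∀ w : ℂ, r ≤ dist w w₀ → DifferentiableAt ℂ k w := by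
    intro w hw
    have hwn : r ≤ ‖w - w₀‖ := by rwa [← dist_eq_norm]
    have hwne : w - w₀ ≠ 0 := by
      intro h0
      rw [h0, norm_zero] at hwn; linarith
    have hwz : w - z ≠ 0 := by
      rw [sub_ne_zero]
      intro h0
      exact absurd (h0 ▸ hw) (not_le.2 hdr)
    have hu : ‖(w - w₀)⁻¹‖ ≤ r' / r ^ 2 := by
      rw [norm_inv]
      calc ‖w - w₀‖⁻¹ ≤ r⁻¹ := inv_anti₀ hr hwn
        _ ≤ r' / r ^ 2 := by rw [← one_div]; exact hthr.le
    exact (((hdH _ hu).comp w ((differentiableAt_id.sub_const w₀).inv hwne)).sub_const L).div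
      (differentiableAt_id.sub_const z) hwz
  have hann : ∀ R : ℝ, r ≤ R → (∮ w in C(w₀, R), k w) = ∮ w in C(w₀, r), k w := by
    intro R hR
    apply Complex.circleIntegral_eq_of_differentiable_on_annulus_off_countable hr hR
      Set.countable_empty
    · intro w hw
      have : r ≤ dist w w₀ := not_lt.1 (by simpa [mem_ball] using hw.2)
      exact (hdk w this).continuousAt.continuousWithinAt
    · intro w hw
      have : r ≤ dist w w₀ := not_lt.1 fun hlt =>
        hw.1.2 (mem_closedBall.2 hlt.le)
      exact hdk w this
  have hHcont : ContinuousOn H (ball 0 (r' / r ^ 2)) := fun u hu =>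
    (hdH u (le_of_lt (mem_ball_zero_iff.mp hu))).continuousAt.continuousWithinAt
  have hdsl : ContinuousOn (dslope H 0) (closedBall 0 (1 / r)) := by
    have h0 : ball (0 : ℂ) (r' / r ^ 2) ∈ nhds (0 : ℂ) :=
      ball_mem_nhds _ (by positivity)
    exact ((continuousOn_dslope h0).2
      ⟨hHcont, hdH 0 (by simp; positivity)⟩).mono (closedBall_subset_ball hthr)
  obtain ⟨M, hM⟩ := (isCompact_closedBall (0 : ℂ) (1 / r)).exists_bound_of_continuousOn hdsl
  have hHb : ∀ u : ℂ, ‖u‖ ≤ 1 / r → ‖H u - L‖ ≤ M * ‖u‖ := by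
    intro u hu
    have h1 : H u - H 0 = (u - 0) • dslope H 0 u := (sub_smul_dslope H 0 u).symm
    rw [← hH0, h1, sub_zero, smul_eq_mul, norm_mul, mul_comm]
    exact mul_le_mul_of_nonneg_right
      (hM u (mem_closedBall_zero_iff.2 hu)) (norm_nonneg u)
  have hbound : ∀ R : ℝ, r ≤ R → ‖∮ w in C(w₀, r), k w‖ ≤ 2 * Real.pi * M / (R - dist z w₀) := by
    intro R hR
    rw [← hann R hR]
    have hRpos : 0 < R := lt_of_lt_of_le hr hR
    have hRd : 0 < R - dist z w₀ := by linarith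
    have hM0 : 0 ≤ M :=
      le_trans (norm_nonneg _) (hM 0 (mem_closedBall_self (by positivity)))
    have hb : ∀ w ∈ sphere w₀ R, ‖k w‖ ≤ (M / R) / (R - dist z w₀) := by
      intro w hw
      have hwR : ‖w - w₀‖ = R := by rw [← dist_eq_norm]; exact mem_sphere.mp hw
      have hu : ‖(w - w₀)⁻¹‖ = 1 / R := by rw [norm_inv, hwR, one_div]
      have h1 : ‖H ((w - w₀)⁻¹) - L‖ ≤ M / R := by
        have h2 := hHb ((w - w₀)⁻¹) (by
          rw [hu]
          exact one_div_le_one_div_of_le hr hR)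
        rw [hu] at h2
        calc ‖H ((w - w₀)⁻¹) - L‖ ≤ M * (1 / R) := h2
          _ = M / R := by ring
      have h2 : R - dist z w₀ ≤ ‖w - z‖ := by
        have ht := dist_triangle w z w₀
        have h3 : dist w w₀ = R := mem_sphere.mp hw
        have h4 : dist w z = ‖w - z‖ := dist_eq_norm w z
        linarith
      calc ‖k w‖ = ‖H ((w - w₀)⁻¹) - L‖ / ‖w - z‖ := by simp only [hk, norm_div]
        _ ≤ (M / R) / (R - dist z w₀) := div_le_div₀ (by positivity) h1 hRd h2
    have h5 := circleIntegral.norm_integral_le_of_norm_le_const hRpos.le hb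
    calc ‖∮ w in C(w₀, R), k w‖ ≤ 2 * Real.pi * R * (M / R / (R - dist z w₀)) := h5
      _ = 2 * Real.pi * M / (R - dist z w₀) := by field_simp
  have hk0 : (∮ w in C(w₀, r), k w) = 0 := by
    have htend : Filter.Tendsto (fun R : ℝ => 2 * Real.pi * M / (R - dist z w₀))
        Filter.atTop (nhds 0) := by
      apply Filter.Tendsto.div_atTop tendsto_const_nhds
      have := Filter.tendsto_atTop_add_const_right Filter.atTop (-(dist z w₀)) Filter.tendsto_id
      simpa [sub_eq_add_neg] using this
    have hle : ‖∮ w in C(w₀, r), k w‖ ≤ 0 :=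
      ge_of_tendsto htend (Filter.eventually_atTop.2 ⟨r, fun R hR => hbound R hR⟩)
    exact norm_le_zero_iff.mp hle
  -- identity on the circle
  have hEqOn : ∀ w ∈ sphere w₀ r,
      k w = (starRingEnd ℂ) (f w) / (w - z) - L * (w - z)⁻¹ := by
    intro w hw
    have hwr : ‖w - w₀‖ = r := by rw [← dist_eq_norm]; exact mem_sphere.mp hw
    have hwne : w - w₀ ≠ 0 := by
      intro h0; rw [h0, norm_zero] at hwr; linarith
    have hmc : (w - w₀) * (starRingEnd ℂ) (w - w₀) = ((r : ℝ) : ℂ) ^ 2 := by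
      rw [Complex.mul_conj, Complex.normSq_eq_norm_sq, hwr]
      norm_cast
    have hinv : ((r : ℝ) : ℂ) ^ 2 * (w - w₀)⁻¹ = (starRingEnd ℂ) (w - w₀) := by
      field_simp [← hmc]
      exact hmc.symm
    have hkey : H ((w - w₀)⁻¹) = (starRingEnd ℂ) (f w) := by
      have h6 : (starRingEnd ℂ) w₀ + ((r : ℝ) : ℂ) ^ 2 * (w - w₀)⁻¹ = (starRingEnd ℂ) w := by
        rw [hinv, map_sub]; ring
      simp only [hH, hF, h6, Complex.conj_conj]
    simp only [hk, hkey]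
    ring
  have hcont_orig : ContinuousOn (fun w => (starRingEnd ℂ) (f w) / (w - z)) (sphere w₀ r) := by
    apply ContinuousOn.div
    · exact Complex.continuous_conj.comp_continuousOn
        ((hf.continuousOn).mono (Set.Subset.trans sphere_subset_closedBall hsub))
    · exact (continuousOn_id.sub continuousOn_const)
    · exact hsne
  have hcont_inv : ContinuousOn (fun w : ℂ => L * (w - z)⁻¹) (sphere w₀ r) := by
    apply continuousOn_const.mul
    apply ContinuousOn.inv₀ (continuousOn_id.sub continuousOn_const)
    exact hsne
  have hint1 : CircleIntegrable (fun w => (starRingEnd ℂ) (f w) / (w - z)) w₀ r :=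
    hcont_orig.circleIntegrable hr.le
  have hint2 : CircleIntegrable (fun w : ℂ => L * (w - z)⁻¹) w₀ r :=
    hcont_inv.circleIntegrable hr.le
  have hsplit : (∮ w in C(w₀, r), k w)
      = (∮ w in C(w₀, r), (starRingEnd ℂ) (f w) / (w - z))
        - ∮ w in C(w₀, r), L * (w - z)⁻¹ := by
    rw [← circleIntegral.integral_sub hint1 hint2]
    exact circleIntegral.integral_congr hr.le fun w hw => hEqOn w hw
  have h2pi : (∮ w in C(w₀, r), (w - z)⁻¹) = 2 * Real.pi * Complex.I :=
    circleIntegral.integral_sub_inv_of_mem_ball hz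
  have hsmul : (∮ w in C(w₀, r), L * (w - z)⁻¹) = L * (2 * Real.pi * Complex.I) := by
    have h7 := circleIntegral.integral_smul (𝕜 := ℂ) L (fun w : ℂ => (w - z)⁻¹) w₀ r
    simp only [smul_eq_mul] at h7
    rw [h7, h2pi]
  have hval : (∮ w in C(w₀, r), (starRingEnd ℂ) (f w) / (w - z))
      = L * (2 * Real.pi * Complex.I) := by
    have h8 := hsplit
    rw [hk0, hsmul] at h8
    exact sub_eq_zero.mp h8.symm
  rw [hval, mul_comm L, ← mul_assoc, inv_mul_cancel₀ Complex.two_pi_I_ne_zero, one_mul]
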